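/- If the radial displacement r follows a Rayleigh distribution with scale parameter σ_s (PDF f_r(r) = (r/σ_s²)exp(-r²/(2σ_s²)) for r > 0), and h_p = A_0·exp(-2r²/w_eq²) with A_0 > 0 and w_eq > 0, then the probability density function of h_p is f(x) = (ξ/A_0^ξ)·x^(ξ-1) for 0 ≤ x ≤ A_0, where ξ = w_eq²/(4σ_s²). -/

import Mathlib

open MeasureTheory Real

/-- If the radial displacement `r` is Rayleigh distributed with scale `σ` and
`h_p = A₀ exp(-2r²/w_eq²)`, then the PDF of `h_p` is `(ξ/A₀^ξ) x^(ξ-1)` on `[0, A₀]`,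
expressed via the equality of the CDF of `h_p` with the integral of the claimed density. -/
theorem stmt_0 (σ w A₀ ξ : ℝ) (hσ : 0 < σ) (hw : 0 < w)
    (hA₀ : 0 < A₀) (hA₀1 : A₀ ≤ 1) (hξ : ξ = w ^ 2 / (4 * σ ^ 2)) :
    ∀ x : ℝ, 0 < x → x ≤ A₀ →
      (∫ r in {r : ℝ | 0 < r ∧ A₀ * Real.exp (-2 * r ^ 2 / w ^ 2) ≤ x},
          r / σ ^ 2 * Real.exp (-r ^ 2 / (2 * σ ^ 2)))
        = ∫ t in (0 : ℝ)..x, ξ / A₀ ^ ξ * t ^ (ξ - 1) := by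
  intro x hx hxA
  have hξ0 : 0 < ξ := by rw [hξ]; positivity
  have hlog : 0 ≤ Real.log (A₀ / x) := Real.log_nonneg (by
    rw [le_div_iff₀ hx]; linarith)
  have hc : 0 ≤ w ^ 2 / 2 * Real.log (A₀ / x) := by positivity
  set a : ℝ := Real.sqrt (w ^ 2 / 2 * Real.log (A₀ / x)) with ha
  have ha0 : 0 ≤ a := Real.sqrt_nonneg _
  have ha2 : a ^ 2 = w ^ 2 / 2 * Real.log (A₀ / x) := Real.sq_sqrt hc
  -- the set is a.e. equal to Ioi a
  have hset : {r : ℝ | 0 < r ∧ A₀ * Real.exp (-2 * r ^ 2 / w ^ 2) ≤ x}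
      =ᵐ[volume] Set.Ioi a := by
    have hne : ∀ᵐ r : ℝ, r ≠ a := ae_iff.mpr (by simp)
    filter_upwards [hne] with r hr
    simp only [Set.mem_setOf_eq, Set.mem_Ioi, eq_iff_iff]
    constructor
    · rintro ⟨hr0, hle⟩
      have h1 : Real.exp (-2 * r ^ 2 / w ^ 2) ≤ x / A₀ := by
        rw [le_div_iff₀ hA₀]; linarith [mul_comm A₀ (Real.exp (-2 * r ^ 2 / w ^ 2))]
      have h2 : -2 * r ^ 2 / w ^ 2 ≤ Real.log (x / A₀) := by
        have := Real.log_le_log (Real.exp_pos _) h1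
        rwa [Real.log_exp] at this
      have hlogeq : Real.log (x / A₀) = -Real.log (A₀ / x) := by
        rw [Real.log_div hx.ne' hA₀.ne', Real.log_div hA₀.ne' hx.ne']; ring
      have hdd : -2 * r ^ 2 / w ^ 2 = -(2 * r ^ 2 / w ^ 2) := by ring
      rw [hlogeq, hdd] at h2
      have h3 : Real.log (A₀ / x) ≤ 2 * r ^ 2 / w ^ 2 := by linarith
      have hw2 : (0:ℝ) < w ^ 2 := by positivity
      rw [le_div_iff₀ hw2] at h3
      have h4 : a ^ 2 ≤ r ^ 2 := by rw [ha2]; nlinarith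
      have : a ≤ r := by
        have h5 := Real.sqrt_le_sqrt h4
        rwa [Real.sqrt_sq ha0, Real.sqrt_sq hr0.le] at h5
      exact lt_of_le_of_ne this (Ne.symm hr)
    · intro har
      have hr0 : 0 < r := lt_of_le_of_lt ha0 har
      refine ⟨hr0, ?_⟩
      have h4 : a ^ 2 ≤ r ^ 2 := pow_le_pow_left₀ ha0 har.le 2
      rw [ha2] at h4
      have hw2 : (0:ℝ) < w ^ 2 := by positivity
      have h3 : Real.log (A₀ / x) ≤ 2 * r ^ 2 / w ^ 2 := by
        rw [le_div_iff₀ hw2]; nlinarith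
      have hlogeq : Real.log (x / A₀) = -Real.log (A₀ / x) := by
        rw [Real.log_div hx.ne' hA₀.ne', Real.log_div hA₀.ne' hx.ne']; ring
      have h2 : -2 * r ^ 2 / w ^ 2 ≤ Real.log (x / A₀) := by
        rw [hlogeq]
        have hdd : -2 * r ^ 2 / w ^ 2 = -(2 * r ^ 2 / w ^ 2) := by ring
        rw [hdd]; linarith
      have h1 : Real.exp (-2 * r ^ 2 / w ^ 2) ≤ x / A₀ := by
        calc Real.exp (-2 * r ^ 2 / w ^ 2) ≤ Real.exp (Real.log (x / A₀)) :=
              Real.exp_le_exp.mpr h2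
          _ = x / A₀ := Real.exp_log (by positivity)
      rw [mul_comm]
      calc Real.exp (-2 * r ^ 2 / w ^ 2) * A₀ ≤ x / A₀ * A₀ := by
            exact mul_le_mul_of_nonneg_right h1 hA₀.le
        _ = x := by field_simp
  rw [setIntegral_congr_set hset]
  -- compute the left integral via antiderivative
  have hσ2 : (0:ℝ) < σ ^ 2 := by positivity
  have hderiv : ∀ r ∈ Set.Ici a, HasDerivAt (fun r => -Real.exp (-r ^ 2 / (2 * σ ^ 2)))
      (r / σ ^ 2 * Real.exp (-r ^ 2 / (2 * σ ^ 2))) r := by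
    intro r _
    have h0 : HasDerivAt (fun r : ℝ => r ^ 2) (2 * r) r := by
      simpa using hasDerivAt_pow 2 r
    have h : HasDerivAt (fun r : ℝ => -r ^ 2 / (2 * σ ^ 2)) (-r / σ ^ 2) r := by
      have := h0.neg.div_const (2 * σ ^ 2)
      refine this.congr_deriv ?_
      field_simp
    have := (h.exp).neg
    refine this.congr_deriv ?_
    field_simp
  have hnn : ∀ r ∈ Set.Ioi a, 0 ≤ r / σ ^ 2 * Real.exp (-r ^ 2 / (2 * σ ^ 2)) := by
    intro r hr
    have : 0 < r := lt_of_le_of_lt ha0 hr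
    positivity
  have htend : Filter.Tendsto (fun r : ℝ => -Real.exp (-r ^ 2 / (2 * σ ^ 2)))
      Filter.atTop (nhds 0) := by
    rw [show (0:ℝ) = -0 by ring]
    apply Filter.Tendsto.neg
    have h1 : Filter.Tendsto (fun r : ℝ => -r ^ 2 / (2 * σ ^ 2)) Filter.atTop Filter.atBot := by
      apply Filter.Tendsto.atBot_div_const (by positivity)
      exact Filter.tendsto_neg_atBot_iff.mpr (Filter.tendsto_pow_atTop (by norm_num))
    exact Real.tendsto_exp_atBot.comp h1
  rw [MeasureTheory.integral_Ioi_of_hasDerivAt_of_nonneg' hderiv hnn htend]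
  -- evaluate: LHS = exp(-a²/(2σ²)) = (x/A₀)^ξ
  have hLHS : (0 : ℝ) - -Real.exp (-a ^ 2 / (2 * σ ^ 2)) = x ^ ξ / A₀ ^ ξ := by
    rw [zero_sub, neg_neg, ha2]
    have harg : -(w ^ 2 / 2 * Real.log (A₀ / x)) / (2 * σ ^ 2)
        = ξ * Real.log (x / A₀) := by
      have hlogeq : Real.log (x / A₀) = -Real.log (A₀ / x) := by
        rw [Real.log_div hx.ne' hA₀.ne', Real.log_div hA₀.ne' hx.ne']; ring
      rw [hlogeq, hξ]
      field_simp
      ring_nf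
    rw [harg, ← Real.log_rpow (by positivity), Real.exp_log (by positivity),
      Real.div_rpow hx.le hA₀.le]
  rw [hLHS]
  -- compute the right integral
  rw [intervalIntegral.integral_const_mul, integral_rpow (Or.inl (by linarith)),
    sub_add_cancel, Real.zero_rpow hξ0.ne', sub_zero]
  field_simp
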